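/- Let a, b, c ∈ ℂ with c not a nonpositive integer. Then there is an open neighborhood U of 0 in ℂ such that the function g(x) = ₂F₁(a, b; c; x(2-x)) satisfies Heun's differential equation with parameters (t, q; a', b'; c'; d') = (2, 4ab; 2a, 2b; c; 2a+2b-2c+1) at every x ∈ U with x ∉ {0, 1, 2}. -/

import Mathlib

open Complex

/-- `g` satisfies Heun's differential equation with parameters `(t, q; a, b; c; d)`
at the point `x`: `g` is twice complex differentiable at `x` and
`g''(x) + (c/x + d/(x-1) + (a+b-c-d+1)/(x-t)) g'(x) + ((a b x - q)/(x(x-1)(x-t))) g(x) = 0`. -/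
def SatisfiesHeunAt (t q a b c d : ℂ) (g : ℂ → ℂ) (x : ℂ) : Prop :=
  DifferentiableAt ℂ g x ∧ DifferentiableAt ℂ (deriv g) x ∧
    deriv (deriv g) x +
      (c / x + d / (x - 1) + (a + b - c - d + 1) / (x - t)) * deriv g x +
      ((a * b * x - q) / (x * (x - 1) * (x - t))) * g x = 0

section HeunAux

open Filter Nat

noncomputable def kk (a b c : ℂ) (n : ℕ) : ℂ :=
  ((n ! : ℂ)⁻¹) * (ascPochhammer ℂ n).eval a * (ascPochhammer ℂ n).eval b *
    ((ascPochhammer ℂ n).eval c)⁻¹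

lemma kk_rec (a b c : ℂ) (hc : ∀ n : ℕ, c ≠ -(n : ℂ)) (n : ℕ) :
    ((n : ℂ) + 1) * ((n : ℂ) + c) * kk a b c (n + 1)
      = ((n : ℂ) + a) * ((n : ℂ) + b) * kk a b c n := by
  have hcn : c + (n : ℂ) ≠ 0 := fun h => hc n (by linear_combination h)
  have hPc : (ascPochhammer ℂ n).eval c ≠ 0 := by
    rw [Ne, ascPochhammer_eval_eq_zero_iff]
    rintro ⟨k, hk, hkc⟩
    exact hc k (by linear_combination hkc)
  have hfac : (n ! : ℂ) ≠ 0 := Nat.cast_ne_zero.mpr n.factorial_ne_zero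
  have hn1 : ((n : ℂ) + 1) ≠ 0 := by
    have := Nat.cast_ne_zero (R := ℂ).mpr (Nat.succ_ne_zero n)
    push_cast at this; exact this
  simp only [kk, ascPochhammer_succ_eval, Nat.factorial_succ, Nat.cast_mul, Nat.cast_add,
    Nat.cast_one, mul_inv]
  field_simp
  ring

lemma ksummable (a b c : ℂ) (hc : ∀ n : ℕ, c ≠ -(n:ℂ)) :
    Summable (fun n => ‖kk a b c n‖ * (7/8 : ℝ)^n) := by
  have hrad : 1 ≤ (ordinaryHypergeometricSeries ℂ a b c).radius := by
    by_cases ha : ∃ k : ℕ, (k:ℂ) = -a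
    · obtain ⟨k, hk⟩ := ha
      have h : a = -(k:ℂ) := by linear_combination hk
      rw [h, ordinaryHypergeometric_radius_top_of_neg_nat₁]; exact le_top
    · by_cases hb : ∃ k : ℕ, (k:ℂ) = -b
      · obtain ⟨k, hk⟩ := hb
        have h : b = -(k:ℂ) := by linear_combination hk
        rw [h, ordinaryHypergeometric_radius_top_of_neg_nat₂]; exact le_top
      · push_neg at ha hb
        rw [ordinaryHypergeometricSeries_radius_eq_one]
        intro kn
        exact ⟨ha kn, hb kn, fun h => hc kn (by linear_combination h)⟩
  have h78 : ((7/8 : NNReal) : ENNReal) < (ordinaryHypergeometricSeries ℂ a b c).radius := by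
    refine lt_of_lt_of_le ?_ hrad
    rw [show (1:ENNReal) = ((1:NNReal):ENNReal) from rfl, ENNReal.coe_lt_coe,
      ← NNReal.coe_lt_coe]
    push_cast
    norm_num
  have h := (ordinaryHypergeometricSeries ℂ a b c).summable_norm_mul_pow h78
  have h' : ∀ n:ℕ, ‖(ordinaryHypergeometricSeries ℂ a b c) n‖ = ‖kk a b c n‖ := fun n => by
    rw [ordinaryHypergeometricSeries, FormalMultilinearSeries.ofScalars_norm]; rfl
  have hco : ((7/8 : NNReal) : ℝ) = (7/8 : ℝ) := by norm_num
  simpa [h', hco] using h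

lemma usummable (a b c : ℂ) (hc : ∀ n : ℕ, c ≠ -(n:ℂ)) :
    Summable (fun n : ℕ => 4*((n:ℝ)+2)^2 * ‖kk a b c n‖ * (3/4 : ℝ)^n) := by
  obtain ⟨C, hC⟩ := ((ksummable a b c hc).tendsto_atTop_zero).bddAbove_range
  simp only [mem_upperBounds, Set.mem_range, forall_exists_index] at hC
  have hC' : ∀ n : ℕ, ‖kk a b c n‖ * (7/8:ℝ)^n ≤ C := fun n => hC _ n rfl
  have hgeo : Summable (fun n : ℕ => C * (4*((n:ℝ)+2)^2 * (6/7:ℝ)^n)) := by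
    apply Summable.mul_left
    have h2 : Summable (fun n : ℕ => (n:ℝ)^2 * (6/7:ℝ)^n) :=
      summable_pow_mul_geometric_of_norm_lt_one 2 (by rw [Real.norm_eq_abs, abs_of_pos] <;> norm_num)
    have h1 : Summable (fun n : ℕ => (n:ℝ)^1 * (6/7:ℝ)^n) :=
      summable_pow_mul_geometric_of_norm_lt_one 1 (by rw [Real.norm_eq_abs, abs_of_pos] <;> norm_num)
    have h0 : Summable (fun n : ℕ => (6/7:ℝ)^n) := summable_geometric_of_lt_one (by norm_num) (by norm_num)
    have := ((h2.mul_left 4).add (h1.mul_left 16)).add (h0.mul_left 16)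
    convert this using 2 with n
    ring
  refine Summable.of_nonneg_of_le (fun n => ?_) (fun n => ?_) hgeo
  · positivity
  · have hk0 : (0:ℝ) ≤ ‖kk a b c n‖ := norm_nonneg _
    have key : (3/4:ℝ)^n = (6/7:ℝ)^n * (7/8:ℝ)^n := by
      rw [← mul_pow]; norm_num
    have h78 : (0:ℝ) ≤ (7/8:ℝ)^n := by positivity
    calc 4*((n:ℝ)+2)^2 * ‖kk a b c n‖ * (3/4:ℝ)^n
        = (4*((n:ℝ)+2)^2 * (6/7:ℝ)^n) * (‖kk a b c n‖ * (7/8:ℝ)^n) := by rw [key]; ring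
      _ ≤ (4*((n:ℝ)+2)^2 * (6/7:ℝ)^n) * C := by
          have : (0:ℝ) ≤ 4*((n:ℝ)+2)^2 * (6/7:ℝ)^n := by positivity
          exact mul_le_mul_of_nonneg_left (hC' n) this
      _ = C * (4*((n:ℝ)+2)^2 * (6/7:ℝ)^n) := by ring

noncomputable def ff (a b c : ℂ) (z : ℂ) : ℂ := ∑' n : ℕ, kk a b c n * z ^ n
noncomputable def ff1 (a b c : ℂ) (z : ℂ) : ℂ :=
  ∑' n : ℕ, kk a b c n * ((n : ℂ) * z ^ (n - 1))
noncomputable def ff2 (a b c : ℂ) (z : ℂ) : ℂ :=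
  ∑' n : ℕ, kk a b c n * ((n : ℂ) * ((n - 1 : ℕ) : ℂ) * z ^ (n - 1 - 1))

lemma bound0 (a b c : ℂ) {z : ℂ} (hz : ‖z‖ ≤ 3/4) (n : ℕ) :
    ‖kk a b c n * z ^ n‖ ≤ 4*((n:ℝ)+2)^2 * ‖kk a b c n‖ * (3/4 : ℝ)^n := by
  rw [norm_mul, norm_pow]
  have h1 : ‖z‖^n ≤ (3/4:ℝ)^n := pow_le_pow_left₀ (norm_nonneg z) hz n
  have h2 : ‖kk a b c n‖ * ‖z‖^n ≤ ‖kk a b c n‖ * (3/4:ℝ)^n :=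
    mul_le_mul_of_nonneg_left h1 (norm_nonneg _)
  have h3 : (0:ℝ) ≤ ‖kk a b c n‖ * (3/4:ℝ)^n := by positivity
  have h5 : ‖kk a b c n‖ * (3/4:ℝ)^n ≤ 4*((n:ℝ)+2)^2 * (‖kk a b c n‖ * (3/4:ℝ)^n) :=
    le_mul_of_one_le_left h3 (by nlinarith [Nat.cast_nonneg (α := ℝ) n])
  linarith

lemma bound1 (a b c : ℂ) {z : ℂ} (hz : ‖z‖ ≤ 3/4) (n : ℕ) :
    ‖kk a b c n * ((n:ℂ) * z ^ (n-1))‖ ≤ 4*((n:ℝ)+2)^2 * ‖kk a b c n‖ * (3/4 : ℝ)^n := by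
  match n with
  | 0 => simpa using by positivity
  | (m+1) =>
    rw [norm_mul, norm_mul, norm_pow, Complex.norm_natCast]
    simp only [Nat.add_sub_cancel, Nat.cast_add, Nat.cast_one]
    have h1 : ‖z‖^m ≤ (3/4:ℝ)^m := pow_le_pow_left₀ (norm_nonneg z) hz m
    have hK : (0:ℝ) ≤ ‖kk a b c (m+1)‖ := norm_nonneg _
    have hB : (0:ℝ) ≤ (3/4:ℝ)^m := by positivity
    have h2 : ((m:ℝ)+1) ≤ 3*((m:ℝ)+1+2)^2 := by nlinarith [Nat.cast_nonneg (α := ℝ) m]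
    have h3 : ‖kk a b c (m+1)‖ * (((m:ℝ)+1) * ‖z‖^m)
        ≤ ‖kk a b c (m+1)‖ * (((m:ℝ)+1) * (3/4:ℝ)^m) := by
      apply mul_le_mul_of_nonneg_left _ hK
      exact mul_le_mul_of_nonneg_left h1 (by positivity)
    have h4 := mul_le_mul_of_nonneg_right h2 (mul_nonneg hK hB)
    rw [show ((3:ℝ)/4)^(m+1) = (3/4:ℝ)^m * (3/4) from pow_succ _ _]
    nlinarith [h3, h4]

lemma bound2 (a b c : ℂ) {z : ℂ} (hz : ‖z‖ ≤ 3/4) (n : ℕ) :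
    ‖kk a b c n * ((n:ℂ) * ((n - 1 : ℕ) : ℂ) * z ^ (n-1-1))‖
      ≤ 4*((n:ℝ)+2)^2 * ‖kk a b c n‖ * (3/4 : ℝ)^n := by
  match n with
  | 0 => simpa using by positivity
  | 1 => simpa using by positivity
  | (m+2) =>
    rw [norm_mul, norm_mul, norm_mul, norm_pow, Complex.norm_natCast, Complex.norm_natCast]
    simp only [show m+2-1 = m+1 from rfl, show m+1-1 = m from rfl, Nat.cast_add,
      Nat.cast_ofNat, Nat.cast_one]
    have h1 : ‖z‖^m ≤ (3/4:ℝ)^m := pow_le_pow_left₀ (norm_nonneg z) hz m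
    have hK : (0:ℝ) ≤ ‖kk a b c (m+2)‖ := norm_nonneg _
    have hB : (0:ℝ) ≤ (3/4:ℝ)^m := by positivity
    have h2 : ((m:ℝ)+2) * ((m:ℝ)+1) ≤ (9/4)*((m:ℝ)+2+2)^2 := by
      nlinarith [Nat.cast_nonneg (α := ℝ) m]
    have h3 : ‖kk a b c (m+2)‖ * (((m:ℝ)+2) * ((m:ℝ)+1) * ‖z‖^m)
        ≤ ‖kk a b c (m+2)‖ * (((m:ℝ)+2) * ((m:ℝ)+1) * (3/4:ℝ)^m) := by
      apply mul_le_mul_of_nonneg_left _ hK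
      apply mul_le_mul_of_nonneg_left h1 (by positivity)
    have h4 := mul_le_mul_of_nonneg_right h2 (mul_nonneg hK hB)
    rw [show ((3:ℝ)/4)^(m+2) = (3/4:ℝ)^m * (9/16) by rw [pow_add]; norm_num]
    nlinarith [h3, h4]

lemma summ0 (a b c : ℂ) (hc : ∀ n : ℕ, c ≠ -(n:ℂ)) {z : ℂ} (hz : ‖z‖ ≤ 3/4) :
    Summable (fun n : ℕ => kk a b c n * z ^ n) :=
  Summable.of_norm_bounded (usummable a b c hc) (bound0 a b c hz)

lemma summ1 (a b c : ℂ) (hc : ∀ n : ℕ, c ≠ -(n:ℂ)) {z : ℂ} (hz : ‖z‖ ≤ 3/4) :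
    Summable (fun n : ℕ => kk a b c n * ((n:ℂ) * z ^ (n-1))) :=
  Summable.of_norm_bounded (usummable a b c hc) (bound1 a b c hz)

lemma summ2 (a b c : ℂ) (hc : ∀ n : ℕ, c ≠ -(n:ℂ)) {z : ℂ} (hz : ‖z‖ ≤ 3/4) :
    Summable (fun n : ℕ => kk a b c n * ((n:ℂ) * ((n - 1 : ℕ):ℂ) * z ^ (n-1-1))) :=
  Summable.of_norm_bounded (usummable a b c hc) (bound2 a b c hz)

lemma mem34 {z : ℂ} (hz : z ∈ Metric.ball (0:ℂ) (3/4)) : ‖z‖ < 3/4 := by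
  simpa [Metric.mem_ball, Complex.dist_eq] using hz

lemma hasDerivAt_ff (a b c : ℂ) (hc : ∀ n : ℕ, c ≠ -(n:ℂ)) {z : ℂ} (hz : ‖z‖ < 3/4) :
    HasDerivAt (ff a b c) (ff1 a b c z) z := by
  refine hasDerivAt_tsum_of_isPreconnected (usummable a b c hc)
    (Metric.isOpen_ball (x := (0:ℂ)) (ε := 3/4))
    ((convex_ball (0:ℂ) (3/4)).isPreconnected)
    (g := fun n z => kk a b c n * z ^ n)
    (g' := fun n z => kk a b c n * ((n:ℂ) * z ^ (n-1)))
    (fun n y _ => ?_) (fun n y hy => bound1 a b c (mem34 hy).le n)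
    ?_ (summ0 a b c hc (z := 0) (by norm_num)) ?_
  · simpa using (hasDerivAt_pow n y).const_mul (kk a b c n)
  · norm_num [Metric.mem_ball]
  · simpa [Metric.mem_ball, Complex.dist_eq] using hz

lemma hasDerivAt_ff1 (a b c : ℂ) (hc : ∀ n : ℕ, c ≠ -(n:ℂ)) {z : ℂ} (hz : ‖z‖ < 3/4) :
    HasDerivAt (ff1 a b c) (ff2 a b c z) z := by
  refine hasDerivAt_tsum_of_isPreconnected (usummable a b c hc)
    (Metric.isOpen_ball (x := (0:ℂ)) (ε := 3/4))
    ((convex_ball (0:ℂ) (3/4)).isPreconnected)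
    (g := fun n z => kk a b c n * ((n:ℂ) * z ^ (n-1)))
    (g' := fun n z => kk a b c n * ((n:ℂ) * ((n - 1 : ℕ):ℂ) * z ^ (n-1-1)))
    (fun n y _ => ?_) (fun n y hy => bound2 a b c (mem34 hy).le n)
    ?_ (summ1 a b c hc (z := 0) (by norm_num)) ?_
  · have := (hasDerivAt_pow (n-1) y).const_mul (kk a b c n * (n:ℂ))
    simpa [mul_assoc] using this
  · norm_num [Metric.mem_ball]
  · simpa [Metric.mem_ball, Complex.dist_eq] using hz

lemma hypergeom_ode (a b c : ℂ) (hc : ∀ n : ℕ, c ≠ -(n:ℂ)) {z : ℂ} (hz : ‖z‖ ≤ 3/4) :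
    z*(1-z) * ff2 a b c z + (c - (a+b+1)*z) * ff1 a b c z - a*b * ff a b c z = 0 := by
  set K := kk a b c with hK
  have s0 := summ0 a b c hc hz
  have s1 := summ1 a b c hc hz
  have s2 := summ2 a b c hc hz
  set v : ℕ → ℂ := fun n => (n:ℂ) * ((n:ℂ) + c - 1) * K n * z ^ (n-1) with hv
  have hveq : ∀ n : ℕ, v n = z * (K n * ((n:ℂ) * ((n - 1 : ℕ):ℂ) * z ^ (n-1-1)))
      + c * (K n * ((n:ℂ) * z ^ (n-1))) := by
    intro n
    match n with
    | 0 => simp [hv]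
    | 1 => simp [hv]
    | (m+2) =>
      simp only [hv, show m+2-1 = m+1 from rfl, show m+1-1 = m from rfl]
      push_cast
      rw [pow_succ]
      ring
  have hsv : Summable v := by
    refine Summable.congr ((s2.mul_left z).add (s1.mul_left c)) fun n => (hveq n).symm
  have hsv' : Summable (fun n => v (n+1)) := by
    exact (summable_nat_add_iff 1).2 hsv
  have hw2 : ∀ n : ℕ, ((n:ℂ) + a) * ((n:ℂ) + b) * K n * z ^ n = v (n+1) := by
    intro n
    simp only [hv, Nat.add_sub_cancel, Nat.cast_add, Nat.cast_one]
    have := kk_rec a b c hc n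
    rw [← hK] at this
    calc ((n:ℂ) + a) * ((n:ℂ) + b) * K n * z ^ n
        = ((n:ℂ) + a) * ((n:ℂ) + b) * K n * z ^ n := rfl
      _ = ((n:ℂ) + 1) * ((n:ℂ) + c) * K (n+1) * z ^ n := by
          rw [show ((n:ℂ) + a) * ((n:ℂ) + b) * K n = ((n:ℂ) + 1) * ((n:ℂ) + c) * K (n+1) from
            this.symm]
      _ = ((n:ℂ)+1) * ((n:ℂ)+1+c-1) * K (n+1) * z ^ n := by ring
  have key : ∀ n : ℕ,
      z*(1-z) * (K n * ((n:ℂ) * ((n - 1 : ℕ):ℂ) * z ^ (n-1-1)))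
      + (c - (a+b+1)*z) * (K n * ((n:ℂ) * z ^ (n-1)))
      - a*b * (K n * z ^ n) = v n - v (n+1) := by
    intro n
    rw [← hw2 n]
    match n with
    | 0 => simp [hv]
    | 1 =>
      simp only [hv, show (1:ℕ)-1 = 0 from rfl, show (0:ℕ)-1 = 0 from rfl]
      push_cast
      ring
    | (m+2) =>
      simp only [hv, show m+2-1 = m+1 from rfl, show m+1-1 = m from rfl]
      push_cast
      rw [show z^(m+2) = z^m*z*z by rw [pow_succ, pow_succ], show z^(m+1) = z^m*z by
        rw [pow_succ]]
      ring
  calc z*(1-z) * ff2 a b c z + (c - (a+b+1)*z) * ff1 a b c z - a*b * ff a b c z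
      = (∑' n : ℕ, z*(1-z) * (K n * ((n:ℂ) * ((n - 1 : ℕ):ℂ) * z ^ (n-1-1))))
        + (∑' n : ℕ, (c - (a+b+1)*z) * (K n * ((n:ℂ) * z ^ (n-1))))
        - (∑' n : ℕ, a*b * (K n * z ^ n)) := by
        rw [ff, ff1, ff2, tsum_mul_left, tsum_mul_left, tsum_mul_left]
    _ = ∑' n : ℕ, (z*(1-z) * (K n * ((n:ℂ) * ((n - 1 : ℕ):ℂ) * z ^ (n-1-1)))
        + (c - (a+b+1)*z) * (K n * ((n:ℂ) * z ^ (n-1)))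
        - a*b * (K n * z ^ n)) := by
        rw [← Summable.tsum_add (s2.mul_left _) (s1.mul_left _),
          ← Summable.tsum_sub ((s2.mul_left _).add (s1.mul_left _)) (s0.mul_left _)]
    _ = ∑' n : ℕ, (v n - v (n+1)) := tsum_congr key
    _ = (∑' n : ℕ, v n) - (∑' n : ℕ, v (n+1)) := Summable.tsum_sub hsv hsv'
    _ = 0 := by
        have h0 : v 0 = 0 := by simp [hv]
        rw [Summable.tsum_eq_zero_add hsv, h0, zero_add, sub_self]

theorem stmt5' (a b c : ℂ) (hc : ∀ n : ℕ, c ≠ -(n : ℂ)) :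
    ∃ U : Set ℂ, IsOpen U ∧ (0 : ℂ) ∈ U ∧ ∀ x ∈ U, x ≠ (0 : ℂ) → x ≠ (1 : ℂ) → x ≠ (2 : ℂ) →
      (DifferentiableAt ℂ (fun x : ℂ => ff a b c (x*(2-x))) x ∧
       DifferentiableAt ℂ (deriv (fun x : ℂ => ff a b c (x*(2-x)))) x ∧
        deriv (deriv (fun x : ℂ => ff a b c (x*(2-x)))) x +
          (c / x + (2*a + 2*b - 2*c + 1) / (x - 1) +
            (2*a + 2*b - c - (2*a + 2*b - 2*c + 1) + 1) / (x - 2)) *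
            deriv (fun x : ℂ => ff a b c (x*(2-x))) x +
          ((2*a * (2*b) * x - 4*a*b) / (x * (x - 1) * (x - 2))) * ff a b c (x*(2-x)) = 0) := by
  refine ⟨Metric.ball (0:ℂ) (1/4), Metric.isOpen_ball, by norm_num [Metric.mem_ball], ?_⟩
  intro x hx hx0 hx1 hx2
  have hznorm : ∀ y : ℂ, y ∈ Metric.ball (0:ℂ) (1/4) → ‖y*(2-y)‖ < 3/4 := by
    intro y hy
    have hy' : ‖y‖ < 1/4 := by simpa [Metric.mem_ball, Complex.dist_eq] using hy
    have h1 : ‖y*(2-y)‖ = ‖y‖ * ‖2-y‖ := norm_mul _ _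
    have h2 : ‖(2:ℂ)-y‖ ≤ ‖(2:ℂ)‖ + ‖y‖ := norm_sub_le _ _
    have h3 : ‖(2:ℂ)‖ = 2 := by norm_num
    rw [h1]
    nlinarith [norm_nonneg y, norm_nonneg ((2:ℂ)-y)]
  have hφ : ∀ y : ℂ, HasDerivAt (fun w : ℂ => w*(2-w)) (2-2*y) y := by
    intro y
    have h := (hasDerivAt_id y).fun_mul ((hasDerivAt_id y).const_sub 2)
    simp only [id_eq] at h
    refine h.congr_deriv ?_
    ring
  have hg1 : ∀ y ∈ Metric.ball (0:ℂ) (1/4),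
      HasDerivAt (fun w : ℂ => ff a b c (w*(2-w))) (ff1 a b c (y*(2-y)) * (2-2*y)) y := by
    intro y hy
    exact (hasDerivAt_ff a b c hc (hznorm y hy)).comp y (hφ y)
  have hev : deriv (fun w : ℂ => ff a b c (w*(2-w)))
      =ᶠ[nhds x] fun y => ff1 a b c (y*(2-y)) * (2-2*y) := by
    filter_upwards [Metric.isOpen_ball.mem_nhds hx] with y hy using (hg1 y hy).deriv
  have hlin : HasDerivAt (fun y : ℂ => 2-2*y) (-2 : ℂ) x := by
    have h := ((hasDerivAt_id x).const_mul (2:ℂ)).const_sub 2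
    simp only [id_eq] at h
    refine h.congr_deriv ?_
    ring
  have hprod : HasDerivAt (fun y : ℂ => ff1 a b c (y*(2-y)) * (2-2*y))
      (ff2 a b c (x*(2-x)) * (2-2*x) * (2-2*x) + ff1 a b c (x*(2-x)) * (-2)) x :=
    ((HasDerivAt.comp (h₂ := ff1 a b c) x (hasDerivAt_ff1 a b c hc (hznorm x hx)) (hφ x) :
      HasDerivAt (fun y : ℂ => ff1 a b c (y*(2-y))) _ x)).fun_mul hlin
  have hd1 : deriv (fun w : ℂ => ff a b c (w*(2-w))) x = ff1 a b c (x*(2-x)) * (2-2*x) :=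
    (hg1 x hx).deriv
  have hd2 : deriv (deriv (fun w : ℂ => ff a b c (w*(2-w)))) x
      = ff2 a b c (x*(2-x)) * (2-2*x) * (2-2*x) + ff1 a b c (x*(2-x)) * (-2) := by
    rw [hev.deriv_eq, hprod.deriv]
  refine ⟨(hg1 x hx).differentiableAt, hev.differentiableAt_iff.mpr hprod.differentiableAt, ?_⟩
  rw [hd1, hd2]
  have hode := hypergeom_ode a b c hc (hznorm x hx).le
  have hx1' : x - 1 ≠ 0 := sub_ne_zero.mpr hx1
  have hx2' : x - 2 ≠ 0 := sub_ne_zero.mpr hx2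
  field_simp
  linear_combination (-4*(x-1)) * hode

lemma hyp_eq_ff (a b c : ℂ) :
    (fun x : ℂ => ordinaryHypergeometric a b c (x*(2-x))) = fun x => ff a b c (x*(2-x)) := by
  funext x
  rw [ordinaryHypergeometric_eq_tsum]
  simp only [ff, kk, smul_eq_mul]

end HeunAux

theorem stmt5 (a b c : ℂ) (hc : ∀ n : ℕ, c ≠ -(n : ℂ)) :
    ∃ U : Set ℂ, IsOpen U ∧ (0 : ℂ) ∈ U ∧ ∀ x ∈ U, x ≠ (0 : ℂ) → x ≠ (1 : ℂ) → x ≠ (2 : ℂ) →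
      SatisfiesHeunAt (2) (4*a*b) (2*a) (2*b) (c) (2*a + 2*b - 2*c + 1)
        (fun x : ℂ => ordinaryHypergeometric a b c (x*(2-x))) x := by
  obtain ⟨U, hU, h0, h⟩ := stmt5' a b c hc
  refine ⟨U, hU, h0, fun x hx hx0 hx1 hx2 => ?_⟩
  have hh := h x hx hx0 hx1 hx2
  rw [SatisfiesHeunAt, hyp_eq_ff a b c, congrFun (hyp_eq_ff a b c) x]
  exact hh
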